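/- Let f be analytic on [−1,1] with an analytic continuation to the open Bernstein ellipse E_ρ of parameter ρ > 1, bounded there by |f(z)| ≤ M. Then the Chebyshev coefficients a_k of f satisfy |a_k| ≤ 2Mρ^{−k} for k ≥ 1 and |a_0| ≤ M. -/

import Mathlib

open Complex Polynomial

lemma joukowski_sum (w : ℂ) (hw : w ≠ 0) :
    ‖(w + w⁻¹)/2 - 1‖ + ‖(w + w⁻¹)/2 + 1‖
      = ‖w‖ + (‖w‖)⁻¹ := by
  have h1 : (w + w⁻¹)/2 - 1 = (w - 1)^2 / (2*w) := by field_simp; ring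
  have h2 : (w + w⁻¹)/2 + 1 = (w + 1)^2 / (2*w) := by field_simp; ring
  have hw' : ‖w‖ ≠ 0 := by simpa using hw
  have hpar : (‖w-1‖)^2 + (‖w+1‖)^2 = 2*(‖w‖)^2 + 2 := by
    simp only [Complex.sq_norm, Complex.normSq_apply, Complex.sub_re, Complex.sub_im,
      Complex.add_re, Complex.add_im, Complex.one_re, Complex.one_im]
    ring
  rw [h1, h2, norm_div, norm_div, norm_pow, norm_pow, norm_mul, Complex.norm_two]
  rw [← add_div, hpar]
  field_simp

/-- The open Bernstein ellipse of parameter `ρ`: image of the semi-open annulus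
`1 ≤ |w| < ρ` under the Joukowski map `w ↦ (w + w⁻¹)/2`. -/
def bernsteinEllipse (ρ : ℝ) : Set ℂ :=
  (fun w : ℂ => (w + w⁻¹) / 2) '' {w : ℂ | 1 ≤ ‖w‖ ∧ ‖w‖ < ρ}

lemma bernstein_eq {ρ : ℝ} (hρ : 1 < ρ) :
    bernsteinEllipse ρ = {z : ℂ | ‖z-1‖ + ‖z+1‖ < ρ + ρ⁻¹} := by
  have hρ0 : (0:ℝ) < ρ := by linarith
  ext z
  constructor
  · rintro ⟨w, ⟨h1, h2⟩, rfl⟩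
    have hw : w ≠ 0 := by
      intro h; rw [h] at h1; simp at h1; linarith
    have hs := joukowski_sum w hw
    simp only [Set.mem_setOf_eq]
    rw [hs]
    set r := ‖w‖ with hr
    have h0 : (0:ℝ) < r := by positivity
    have hkey : r⁻¹ - ρ⁻¹ = (ρ - r) * (ρ⁻¹ * r⁻¹) := by
      rw [sub_mul, show ρ * (ρ⁻¹ * r⁻¹) = (ρ * ρ⁻¹) * r⁻¹ by ring,
        show r * (ρ⁻¹ * r⁻¹) = (r * r⁻¹) * ρ⁻¹ by ring,
        mul_inv_cancel₀ (ne_of_gt hρ0), mul_inv_cancel₀ (ne_of_gt h0), one_mul, one_mul]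
    have h3 : ρ⁻¹ * r⁻¹ < 1 := by
      rw [← mul_inv]
      exact inv_lt_one_of_one_lt₀ (by nlinarith)
    nlinarith [mul_lt_mul_of_pos_left h3 (sub_pos.mpr h2)]
  · intro hz
    simp only [Set.mem_setOf_eq] at hz
    obtain ⟨u, hu⟩ := IsAlgClosed.exists_pow_nat_eq (z^2 - 1) (n := 2) (by norm_num)
    have key : ∀ v v' : ℂ, v * v' = 1 → v + v' = 2 * z → 1 ≤ ‖v‖ →
        z ∈ bernsteinEllipse ρ := by
      intro v v' hvv hsum hv1
      have hv0 : v ≠ 0 := by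
        intro h; rw [h, zero_mul] at hvv; exact one_ne_zero hvv.symm
      have hinv : v⁻¹ = v' := by
        field_simp at hvv ⊢; rw [← hvv]
      have hzval : (v + v⁻¹)/2 = z := by rw [hinv, hsum]; ring
      refine ⟨v, ⟨hv1, ?_⟩, hzval⟩
      have hs := joukowski_sum v hv0
      rw [hzval] at hs
      set r := ‖v‖ with hr
      by_contra hcon
      push_neg at hcon
      have hr0 : (0:ℝ) < r := by linarith
      have h3 : ρ⁻¹ - r⁻¹ = (r - ρ) * (ρ⁻¹ * r⁻¹) := by
        rw [sub_mul, show r * (ρ⁻¹ * r⁻¹) = (r * r⁻¹) * ρ⁻¹ by ring,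
          show ρ * (ρ⁻¹ * r⁻¹) = (ρ * ρ⁻¹) * r⁻¹ by ring,
          mul_inv_cancel₀ (ne_of_gt hρ0), mul_inv_cancel₀ (ne_of_gt hr0), one_mul, one_mul]
      have h4 : ρ⁻¹ * r⁻¹ ≤ 1 := by
        rw [← mul_inv]
        exact inv_le_one_of_one_le₀ (by nlinarith)
      nlinarith [sub_nonneg.mpr hcon, mul_le_mul_of_nonneg_left h4 (sub_nonneg.mpr hcon)]
    have hprod : (z + u) * (z - u) = 1 := by linear_combination -hu
    have habs : ‖z + u‖ * ‖z - u‖ = 1 := by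
      rw [← norm_mul, hprod, norm_one]
    rcases le_or_gt 1 (‖z + u‖) with h | h
    · exact key (z + u) (z - u) hprod (by ring) h
    · refine key (z - u) (z + u) (by linear_combination -hu) (by ring) ?_
      rcases eq_or_lt_of_le (norm_nonneg (z+u)) with h0 | h0
      · rw [← h0, zero_mul] at habs; exact absurd habs zero_ne_one
      · nlinarith

lemma isOpen_bernstein {ρ : ℝ} (hρ : 1 < ρ) : IsOpen (bernsteinEllipse ρ) := by
  rw [bernstein_eq hρ]
  exact isOpen_lt (by continuity) continuous_const

lemma integral_exp_int (n : ℤ) :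
    (∫ θ in (0:ℝ)..(2*Real.pi), Complex.exp (n * Complex.I * θ)) =
      if n = 0 then (2*Real.pi : ℂ) else 0 := by
  split_ifs with h
  · subst h
    simp
  · rw [integral_exp_mul_complex (by simp [h, Complex.I_ne_zero])]
    have h1 : Complex.exp ((n : ℂ) * Complex.I * (2*Real.pi)) = 1 := by
      rw [show ((n:ℂ) * Complex.I * (2*Real.pi)) = n * (2*Real.pi*Complex.I) by push_cast; ring]
      exact Complex.exp_int_mul_two_pi_mul_I n
    simp [h1]

theorem chebyshev_coeff_bound_of_analytic (ρ M : ℝ) (hρ : 1 < ρ) (hM : 0 ≤ M)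
    (f : ℂ → ℂ) (hf : DifferentiableOn ℂ f (bernsteinEllipse ρ))
    (hbound : ∀ z ∈ bernsteinEllipse ρ, ‖f z‖ ≤ M)
    (a : ℕ → ℂ)
    (ha : ∀ x ∈ Set.Icc (-1 : ℝ) 1,
      HasSum (fun k : ℕ => a k * (Polynomial.Chebyshev.T ℂ k).eval (x : ℂ)) (f x)) :
    ‖a 0‖ ≤ M ∧
      ∀ k : ℕ, 1 ≤ k → ‖a k‖ ≤ 2 * M * ρ ^ (-(k : ℤ)) := by
  have hπ := Real.pi_pos
  have hρ0 : (0:ℝ) < ρ := by linarith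
  have hEopen : IsOpen (bernsteinEllipse ρ) := isOpen_bernstein hρ
  -- membership of Joukowski images of the open annulus
  have hmem : ∀ w : ℂ, ρ⁻¹ < ‖w‖ → ‖w‖ < ρ →
      ((w + w⁻¹)/2) ∈ bernsteinEllipse ρ := by
    intro w hw1 hw2
    have h0 : (0:ℝ) < ‖w‖ := lt_trans (by positivity) hw1
    have hw0 : w ≠ 0 := by
      intro h; rw [h] at h0; simp at h0
    rw [bernstein_eq hρ]
    simp only [Set.mem_setOf_eq]
    rw [joukowski_sum w hw0]
    have mono : ∀ s : ℝ, 1 ≤ s → s < ρ → s + s⁻¹ < ρ + ρ⁻¹ := by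
      intro s h1 h2
      have h0s : (0:ℝ) < s := by linarith
      have hkey : s⁻¹ - ρ⁻¹ = (ρ - s) * (ρ⁻¹ * s⁻¹) := by
        rw [sub_mul, show ρ * (ρ⁻¹ * s⁻¹) = (ρ * ρ⁻¹) * s⁻¹ by ring,
          show s * (ρ⁻¹ * s⁻¹) = (s * s⁻¹) * ρ⁻¹ by ring,
          mul_inv_cancel₀ (ne_of_gt hρ0), mul_inv_cancel₀ (ne_of_gt h0s), one_mul, one_mul]
      have h3 : ρ⁻¹ * s⁻¹ < 1 := by
        rw [← mul_inv]
        exact inv_lt_one_of_one_lt₀ (by nlinarith)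
      nlinarith [mul_lt_mul_of_pos_left h3 (sub_pos.mpr h2)]
    rcases le_or_gt 1 (‖w‖) with h | h
    · exact mono _ h hw2
    · have h1 : 1 < (‖w‖)⁻¹ := (one_lt_inv₀ h0).mpr h
      have h2 : (‖w‖)⁻¹ < ρ := (inv_lt_comm₀ h0 hρ0).mpr hw1
      have := mono _ (le_of_lt h1) h2
      rw [inv_inv] at this
      linarith
  -- differentiability of the integrand
  set g : ℕ → ℂ → ℂ := fun k z => f ((z + z⁻¹)/2) * z^(-(k:ℤ)-1) with hg
  have hgd : ∀ (k : ℕ) (z : ℂ), ρ⁻¹ < ‖z‖ → ‖z‖ < ρ →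
      DifferentiableAt ℂ (g k) z := by
    intro k z h1 h2
    have h0 : (0:ℝ) < ‖z‖ := lt_trans (by positivity) h1
    have hz0 : z ≠ 0 := by intro h; rw [h] at h0; simp at h0
    have hJd : DifferentiableAt ℂ (fun z : ℂ => (z + z⁻¹)/2) z :=
      (differentiableAt_id.add (differentiableAt_inv hz0)).div_const 2
    have hfd : DifferentiableAt ℂ f ((z + z⁻¹)/2) :=
      hf.differentiableAt (hEopen.mem_nhds (hmem z h1 h2))
    exact (hfd.comp z hJd).mul (differentiableAt_zpow.mpr (Or.inl hz0))
  -- the circle integral is radius-independent on (1, ρ)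
  have hval : ∀ (k : ℕ) (r : ℝ), 1 ≤ r → r < ρ →
      (∮ z in C(0,1), g k z) = ∮ z in C(0,r), g k z := by
    intro k r h1 h2
    have hann : ∀ z : ℂ, z ∈ Metric.closedBall (0:ℂ) r \ Metric.ball (0:ℂ) 1 →
        DifferentiableAt ℂ (g k) z := by
      intro z hz
      simp only [Set.mem_diff, Metric.mem_closedBall, Metric.mem_ball, Complex.dist_eq,
        sub_zero, not_lt] at hz
      refine hgd k z ?_ (lt_of_le_of_lt hz.1 h2)
      calc ρ⁻¹ < 1 := inv_lt_one_of_one_lt₀ hρ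
      _ ≤ ‖z‖ := hz.2
    refine (circleIntegral_eq_of_differentiable_on_annulus_off_countable zero_lt_one h1
      Set.countable_empty (fun z hz => (hann z hz).continuousAt.continuousWithinAt)
      (fun z hz => hann z ⟨Metric.ball_subset_closedBall hz.1.1,
        fun h => hz.1.2 (Metric.ball_subset_closedBall h)⟩)).symm
  -- the norm bound for the circle integral
  have hbound2 : ∀ (k : ℕ) (r : ℝ), 1 ≤ r → r < ρ →
      ‖∮ z in C(0,1), g k z‖ ≤ 2*Real.pi*M*(r^k)⁻¹ := by
    intro k r h1 h2
    have hr0 : (0:ℝ) < r := by linarith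
    rw [hval k r h1 h2]
    have key : ∀ z ∈ Metric.sphere (0:ℂ) r, ‖g k z‖ ≤ M * (r^(k+1))⁻¹ := by
      intro z hz
      simp only [Metric.mem_sphere, Complex.dist_eq, sub_zero] at hz
      have h1' : ρ⁻¹ < ‖z‖ := by
        rw [hz]; calc ρ⁻¹ < 1 := inv_lt_one_of_one_lt₀ hρ
        _ ≤ r := h1
      have hfb : ‖f ((z + z⁻¹)/2)‖ ≤ M := hbound _ (hmem z h1' (hz ▸ h2))
      have hzp : ‖z^(-(k:ℤ)-1)‖ = (r^(k+1))⁻¹ := by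
        rw [show (-(k:ℤ)-1) = -((k+1 : ℕ) : ℤ) by push_cast; ring, norm_zpow,
          hz, zpow_neg, zpow_natCast]
      calc ‖g k z‖ = ‖f ((z + z⁻¹)/2)‖ * ‖z^(-(k:ℤ)-1)‖ := by
            rw [hg]; simp [norm_mul]
      _ ≤ M * (r^(k+1))⁻¹ := by
            rw [hzp]
            exact mul_le_mul_of_nonneg_right hfb (by positivity)
    have := circleIntegral.norm_integral_le_of_norm_le_const (le_of_lt hr0) key
    calc ‖∮ z in C(0,r), g k z‖ ≤ 2*Real.pi*r*(M*(r^(k+1))⁻¹) := this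
    _ = 2*Real.pi*M*(r^k)⁻¹ := by
        field_simp
        ring
  -- summability of the coefficients
  have hsummable : Summable (fun j => ‖a j‖) := by
    have h1 := ha 1 ⟨by norm_num, le_refl 1⟩
    have hT1 : ∀ j : ℕ, Polynomial.eval ((1:ℝ):ℂ) (Polynomial.Chebyshev.T ℂ (j:ℤ)) = 1 := by
      intro j
      have h := Polynomial.Chebyshev.T_complex_cos (0:ℂ) (j:ℤ)
      simpa using h
    simp only [hT1, mul_one] at h1
    exact summable_norm_iff.mpr h1.summable
  -- the value of the circle integral at radius 1
  have hval1 : ∀ k : ℕ, (∮ z in C(0,1), g k z) =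
      if k = 0 then 2*(Real.pi:ℂ)*Complex.I*(a 0) else (Real.pi:ℂ)*Complex.I*(a k) := by
    intro k
    set F : ℕ → ℝ → ℂ := fun j θ =>
      Complex.I * Complex.exp (-(k:ℂ)*Complex.I*θ) * (a j * Complex.cos ((j:ℂ)*θ)) with hF
    have e1 : (∮ z in C(0,1), g k z) = ∫ θ in (0:ℝ)..(2*Real.pi),
        Complex.I * Complex.exp (-(k:ℂ)*Complex.I*θ) * f (Complex.cos (θ:ℂ)) := by
      simp only [hg, circleIntegral, deriv_circleMap, circleMap_zero, one_mul, smul_eq_mul]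
      apply intervalIntegral.integral_congr
      intro θ _
      simp only [Complex.ofReal_one, one_mul]
      have hc : ((Complex.exp ((θ:ℂ)*Complex.I) + (Complex.exp ((θ:ℂ)*Complex.I))⁻¹)/2)
          = Complex.cos (θ:ℂ) := by
        rw [Complex.cos, ← Complex.exp_neg]
        ring_nf
      have hzp : (Complex.exp ((θ:ℂ)*Complex.I))^(-(k:ℤ)-1)
          = Complex.exp ((-(k:ℂ)-1)*((θ:ℂ)*Complex.I)) := by
        rw [← Complex.exp_int_mul]
        congr 1
        push_cast
        ring
      rw [hc, hzp,
        show Complex.exp ((θ:ℂ)*Complex.I) * Complex.I *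
            (f (Complex.cos (θ:ℂ)) * Complex.exp ((-(k:ℂ)-1)*((θ:ℂ)*Complex.I)))
          = Complex.I * (Complex.exp ((θ:ℂ)*Complex.I) *
            Complex.exp ((-(k:ℂ)-1)*((θ:ℂ)*Complex.I))) * f (Complex.cos (θ:ℂ)) by ring,
        ← Complex.exp_add,
        show ((θ:ℂ)*Complex.I + (-(k:ℂ)-1)*((θ:ℂ)*Complex.I)) = -(k:ℂ)*Complex.I*θ by ring]
    have hptwise : ∀ θ : ℝ, HasSum (fun j => F j θ)
        (Complex.I * Complex.exp (-(k:ℂ)*Complex.I*θ) * f (Complex.cos (θ:ℂ))) := by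
      intro θ
      have h := ha (Real.cos θ) ⟨Real.neg_one_le_cos θ, Real.cos_le_one θ⟩
      rw [Complex.ofReal_cos] at h
      have h2 := h.mul_left (Complex.I * Complex.exp (-(k:ℂ)*Complex.I*θ))
      refine (congrArg (HasSum · _) (funext fun j => ?_)).mpr h2
      rw [hF]
      have hT := Polynomial.Chebyshev.T_complex_cos ((θ:ℂ)) (j:ℤ)
      rw [hT]
      push_cast
      ring_nf
    have hint : HasSum (fun j => ∫ θ in (0:ℝ)..(2*Real.pi), F j θ)
        (∫ θ in (0:ℝ)..(2*Real.pi),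
          Complex.I * Complex.exp (-(k:ℂ)*Complex.I*θ) * f (Complex.cos (θ:ℂ))) := by
      apply intervalIntegral.hasSum_integral_of_dominated_convergence
        (bound := fun j _ => ‖a j‖)
      · intro j
        apply Continuous.aestronglyMeasurable
        rw [hF]
        exact (continuous_const.mul (Complex.continuous_exp.comp
            (continuous_const.mul Complex.continuous_ofReal))).mul
          (continuous_const.mul (Complex.continuous_cos.comp
            (continuous_const.mul Complex.continuous_ofReal)))
      · intro j
        apply Filter.Eventually.of_forall
        intro θ _
        rw [hF]
        have h1 : ‖Complex.exp (-(k:ℂ)*Complex.I*θ)‖ = 1 := by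
          rw [Complex.norm_exp]
          simp
        have h2 : ‖Complex.cos ((j:ℂ)*θ)‖ ≤ 1 := by
          rw [show ((j:ℂ)*θ) = (((j*θ : ℝ)):ℂ) by push_cast; ring, ← Complex.ofReal_cos,
            Complex.norm_real, Real.norm_eq_abs]
          exact Real.abs_cos_le_one _
        calc ‖Complex.I * Complex.exp (-(k:ℂ)*Complex.I*θ) * (a j * Complex.cos ((j:ℂ)*θ))‖
            = ‖Complex.I‖ * ‖Complex.exp (-(k:ℂ)*Complex.I*θ)‖ * (‖a j‖ * ‖Complex.cos ((j:ℂ)*θ)‖) := by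
              rw [norm_mul, norm_mul, norm_mul]
        _ ≤ 1 * 1 * (‖a j‖ * 1) := by
              rw [Complex.norm_I, h1]
              gcongr
        _ = ‖a j‖ := by ring
      · exact Filter.Eventually.of_forall (fun θ _ => hsummable)
      · exact intervalIntegrable_const
      · exact Filter.Eventually.of_forall (fun θ _ => hptwise θ)
    have hterm : ∀ j : ℕ, (∫ θ in (0:ℝ)..(2*Real.pi), F j θ) =
        if j = k then (if k = 0 then 2*(Real.pi:ℂ)*Complex.I*(a 0) else (Real.pi:ℂ)*Complex.I*(a k)) else 0 := by
      intro j
      have hFrw : ∀ θ : ℝ, F j θ =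
          (Complex.I*a j/2) * Complex.exp (((((j:ℤ)-(k:ℤ)) : ℤ) : ℂ)*Complex.I*θ) +
          (Complex.I*a j/2) * Complex.exp (((((-(j:ℤ)-(k:ℤ))) : ℤ) : ℂ)*Complex.I*θ) := by
        intro θ
        rw [hF]
        simp only [Complex.cos]
        rw [show Complex.I * Complex.exp (-(k:ℂ)*Complex.I*θ) *
            (a j * ((Complex.exp ((j:ℂ)*θ*Complex.I) + Complex.exp (-((j:ℂ)*θ)*Complex.I))/2))
          = (Complex.I*a j/2) * (Complex.exp (-(k:ℂ)*Complex.I*θ) * Complex.exp ((j:ℂ)*θ*Complex.I))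
          + (Complex.I*a j/2) * (Complex.exp (-(k:ℂ)*Complex.I*θ) * Complex.exp (-((j:ℂ)*θ)*Complex.I)) by ring,
          ← Complex.exp_add, ← Complex.exp_add]
        congr 3 <;> push_cast <;> ring
      rw [intervalIntegral.integral_congr (g := fun θ =>
          (Complex.I*a j/2) * Complex.exp (((((j:ℤ)-(k:ℤ)) : ℤ) : ℂ)*Complex.I*θ) +
          (Complex.I*a j/2) * Complex.exp (((((-(j:ℤ)-(k:ℤ))) : ℤ) : ℂ)*Complex.I*θ))
          (fun θ _ => hFrw θ),
        intervalIntegral.integral_add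
          ((show Continuous fun θ : ℝ =>
              (Complex.I*a j/2) * Complex.exp (((((j:ℤ)-(k:ℤ)) : ℤ) : ℂ)*Complex.I*θ) from continuous_const.mul
            (continuous_const.mul Complex.continuous_ofReal).cexp).intervalIntegrable _ _)
          ((show Continuous fun θ : ℝ =>
              (Complex.I*a j/2) * Complex.exp (((((-(j:ℤ)-(k:ℤ))) : ℤ) : ℂ)*Complex.I*θ) from continuous_const.mul
            (continuous_const.mul Complex.continuous_ofReal).cexp).intervalIntegrable _ _),
        intervalIntegral.integral_const_mul, intervalIntegral.integral_const_mul,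
        integral_exp_int, integral_exp_int]
      by_cases hjk : j = k
      · subst hjk
        by_cases hj0 : j = 0
        · subst hj0
          norm_num
          push_cast
          ring
        · rw [if_pos (by omega : (j:ℤ) - (j:ℤ) = 0), if_neg (by omega : ¬((-(j:ℤ)-(j:ℤ)) = 0)),
            if_pos rfl, if_neg hj0]
          push_cast
          ring
      · rw [if_neg (by omega : ¬((j:ℤ) - (k:ℤ) = 0)), if_neg (by omega : ¬((-(j:ℤ)-(k:ℤ)) = 0)),
          if_neg hjk]
        ring
    simp only [hterm] at hint
    rw [e1]
    exact hint.unique (hasSum_ite_eq k _)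
  -- conclusion
  constructor
  · have h := hbound2 0 1 le_rfl hρ
    rw [hval1 0, if_pos rfl] at h
    have habs : ‖2*(Real.pi:ℂ)*Complex.I*(a 0)‖ = 2*Real.pi*‖a 0‖ := by
      simp [norm_mul, abs_of_pos hπ]
    rw [habs] at h
    simp only [pow_zero, inv_one, mul_one] at h
    nlinarith
  · intro k hk
    have hne : k ≠ 0 := by omega
    have hstep : ∀ r : ℝ, r ∈ Set.Ioo (1:ℝ) ρ → ‖a k‖ * r^k ≤ 2*M := by
      intro r hr
      have h := hbound2 k r (le_of_lt hr.1) hr.2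
      rw [hval1 k, if_neg hne] at h
      have habs : ‖(Real.pi:ℂ)*Complex.I*(a k)‖ = Real.pi*‖a k‖ := by
        simp [norm_mul, abs_of_pos hπ]
      rw [habs] at h
      have hr0' : (0:ℝ) < r := lt_trans one_pos hr.1
      have hrk : (0:ℝ) < r^k := pow_pos hr0' k
      have h2 := mul_le_mul_of_nonneg_right h (le_of_lt hrk)
      rw [show 2*Real.pi*M*(r^k)⁻¹*r^k = 2*Real.pi*M*((r^k)⁻¹*r^k) by ring,
        inv_mul_cancel₀ (ne_of_gt hrk), mul_one] at h2
      nlinarith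
    have hlim : Filter.Tendsto (fun r : ℝ => ‖a k‖ * r^k)
        (nhdsWithin ρ (Set.Iio ρ)) (nhds (‖a k‖ * ρ^k)) :=
      ((continuous_const.mul (continuous_pow k)).tendsto ρ).mono_left nhdsWithin_le_nhds
    have hfinal : ‖a k‖ * ρ^k ≤ 2*M :=
      le_of_tendsto hlim (Filter.eventually_of_mem (Ioo_mem_nhdsLT_of_mem ⟨hρ, le_refl ρ⟩) hstep)
    have hρk : (0:ℝ) < ρ^k := pow_pos hρ0 k
    rw [zpow_neg, zpow_natCast, show 2*M*(ρ^k)⁻¹ = 2*M/ρ^k by rw [div_eq_mul_inv]]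
    exact (le_div_iff₀ hρk).mpr hfinal
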